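/- Let S ⊆ {1,…,m} and let 0 ≤ s ≤ |S|. If rank(F^S) = |S| − s, then every subset of S of cardinality |S| − s + 1 is critical, and there exists a subset of S of cardinality |S| − s that is non-critical. -/

import Mathlib

open Matrix

/-- The verification matrix `F := H (Hᴴ H)⁻¹ Hᴴ - Id`. -/
noncomputable def verif {m n : ℕ} (H : Matrix (Fin m) (Fin n) ℂ) :
    Matrix (Fin m) (Fin m) ℂ :=
  H * (Hᴴ * H)⁻¹ * Hᴴ - 1

/-- A set `S` of measurement (row) indices is critical if deleting the rows of `H`
with indices in `S` leaves a matrix of rank `< n`. -/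
def IsCritical {m n : ℕ} (H : Matrix (Fin m) (Fin n) ℂ) (S : Finset (Fin m)) : Prop :=
  (H.submatrix (fun i : {i : Fin m // i ∉ S} => (i : Fin m)) id).rank < n

/-- `F^S`: the submatrix of `F` formed by the columns with indices in `S`. -/
def colSub {m : ℕ} (F : Matrix (Fin m) (Fin m) ℂ) (S : Finset (Fin m)) :
    Matrix (Fin m) {j : Fin m // j ∈ S} ℂ :=
  F.submatrix id (fun j => (j : Fin m))

open Module Submodule ComplexOrder

lemma aux_rank_lt_card_iff {κ ι : Type*} [Fintype ι] [Fintype κ]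
    (A : Matrix κ ι ℂ) :
    A.rank < Fintype.card ι ↔ ∃ c ≠ 0, A *ᵥ c = 0 := by
  have h := LinearMap.finrank_range_add_finrank_ker A.mulVecLin
  rw [Module.finrank_pi] at h
  have hr : A.rank = finrank ℂ (LinearMap.range A.mulVecLin) := rfl
  have hz : finrank ℂ (LinearMap.ker A.mulVecLin) = 0 ↔
      LinearMap.ker A.mulVecLin = ⊥ := Submodule.finrank_eq_zero
  constructor
  · intro hlt
    have : LinearMap.ker A.mulVecLin ≠ ⊥ := fun hb => by
      rw [← hz] at hb; omega
    obtain ⟨c, hc, hc0⟩ := (Submodule.ne_bot_iff _).mp this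
    exact ⟨c, hc0, by simpa using hc⟩
  · rintro ⟨c, hc0, hc⟩
    have : LinearMap.ker A.mulVecLin ≠ ⊥ :=
      (Submodule.ne_bot_iff _).mpr ⟨c, by simpa using hc, hc0⟩
    have h2 : finrank ℂ (LinearMap.ker A.mulVecLin) ≠ 0 := fun h0 => this (hz.mp h0)
    omega

lemma aux_H_inj {m n : ℕ} (H : Matrix (Fin m) (Fin n) ℂ) (hH : H.rank = n)
    {x : Fin n → ℂ} (hx : H *ᵥ x = 0) : x = 0 := by
  by_contra hx0
  have := (aux_rank_lt_card_iff H).mpr ⟨x, hx0, hx⟩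
  simp [hH] at this

lemma aux_verif_ker {m n : ℕ} (H : Matrix (Fin m) (Fin n) ℂ) (hH : H.rank = n)
    (c : Fin m → ℂ) : verif H *ᵥ c = 0 ↔ ∃ x : Fin n → ℂ, H *ᵥ x = c := by
  have hdet : IsUnit (Hᴴ * H).det := by
    rw [isUnit_iff_ne_zero]
    intro h0
    obtain ⟨v, hv0, hv⟩ := (Matrix.exists_mulVec_eq_zero_iff).mpr h0
    rw [conjTranspose_mul_self_mulVec_eq_zero] at hv
    exact hv0 (aux_H_inj H hH hv)
  have hinv : (Hᴴ * H)⁻¹ * (Hᴴ * H) = 1 := nonsing_inv_mul _ hdet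
  constructor
  · intro h
    refine ⟨((Hᴴ * H)⁻¹ * Hᴴ) *ᵥ c, ?_⟩
    have h2 : (H * (Hᴴ * H)⁻¹ * Hᴴ) *ᵥ c - c = 0 := by
      simpa [verif, sub_mulVec, one_mulVec] using h
    rw [mulVec_mulVec, ← Matrix.mul_assoc]
    exact sub_eq_zero.mp h2
  · rintro ⟨x, rfl⟩
    have key : H * (Hᴴ * H)⁻¹ * Hᴴ * H = H := by
      rw [Matrix.mul_assoc (H * (Hᴴ * H)⁻¹), Matrix.mul_assoc H, hinv, Matrix.mul_one]
    show (H * (Hᴴ * H)⁻¹ * Hᴴ - 1) *ᵥ (H *ᵥ x) = 0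
    rw [sub_mulVec, one_mulVec, mulVec_mulVec, key, sub_self]

lemma aux_mulVec_colSub {m : ℕ} (F : Matrix (Fin m) (Fin m) ℂ) (T : Finset (Fin m))
    (c : {j : Fin m // j ∈ T} → ℂ) :
    colSub F T *ᵥ c = F *ᵥ (fun j => if h : j ∈ T then c ⟨j, h⟩ else 0) := by
  ext i
  simp only [mulVec, dotProduct, colSub, submatrix_apply, id_eq]
  calc (∑ j : {j : Fin m // j ∈ T}, F i j * c j)
      = ∑ j ∈ T.attach, F i j * (if h : (j : Fin m) ∈ T then c ⟨j, h⟩ else 0) := by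
        rw [Finset.univ_eq_attach]
        exact Finset.sum_congr rfl (fun j _ => by rw [dif_pos j.2])
    _ = ∑ j ∈ T, F i j * (if h : j ∈ T then c ⟨j, h⟩ else 0) :=
        Finset.sum_attach T (fun j => F i j * (if h : j ∈ T then c ⟨j, h⟩ else 0))
    _ = ∑ j : Fin m, F i j * (if h : j ∈ T then c ⟨j, h⟩ else 0) :=
        Finset.sum_subset (Finset.subset_univ T) (fun j _ hj => by simp [hj])

lemma aux_colSub_cols {m : ℕ} (F : Matrix (Fin m) (Fin m) ℂ) (T : Finset (Fin m)) :
    Set.range (colSub F T)ᵀ = Fᵀ '' ↑T := by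
  ext v
  constructor
  · rintro ⟨j, rfl⟩; exact ⟨j, j.2, rfl⟩
  · rintro ⟨j, hj, rfl⟩; exact ⟨⟨j, hj⟩, rfl⟩

lemma aux_colSub_rank_eq {m : ℕ} (F : Matrix (Fin m) (Fin m) ℂ) (T : Finset (Fin m)) :
    (colSub F T).rank = finrank ℂ (span ℂ (Fᵀ '' ↑T)) := by
  rw [rank_eq_finrank_span_cols]
  exact congrArg (fun s => finrank ℂ (span ℂ s)) (aux_colSub_cols F T)

lemma aux_isCritical_iff {m n : ℕ} (H : Matrix (Fin m) (Fin n) ℂ) (hH : H.rank = n)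
    (T : Finset (Fin m)) :
    IsCritical H T ↔ (colSub (verif H) T).rank < T.card := by
  have hsub : ∀ (x : Fin n → ℂ) (i : {i : Fin m // i ∉ T}),
      ((H.submatrix (fun i : {i : Fin m // i ∉ T} => (i : Fin m)) id) *ᵥ x) i
        = (H *ᵥ x) (i : Fin m) := fun x i => rfl
  have h1 := aux_rank_lt_card_iff (H.submatrix (fun i : {i : Fin m // i ∉ T} => (i : Fin m)) id)
  rw [Fintype.card_fin] at h1
  have h2 := aux_rank_lt_card_iff (colSub (verif H) T)
  rw [Fintype.card_coe] at h2
  rw [IsCritical, h1, h2]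
  constructor
  · rintro ⟨x, hx0, hx⟩
    set c : {j : Fin m // j ∈ T} → ℂ := fun j => (H *ᵥ x) j with hc
    have hHx0 : H *ᵥ x ≠ 0 := fun h => hx0 (aux_H_inj H hH h)
    have hoff : ∀ i ∉ T, (H *ᵥ x) i = 0 := by
      intro i hi
      have := congrFun hx ⟨i, hi⟩
      rw [hsub] at this
      simpa using this
    have hext : (fun j => if h : j ∈ T then c ⟨j, h⟩ else 0) = H *ᵥ x := by
      funext j
      by_cases h : j ∈ T
      · simp [hc, h]
      · simp [h, hoff j h]
    refine ⟨c, ?_, ?_⟩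
    · intro h0
      apply hHx0
      funext i
      by_cases hi : i ∈ T
      · have := congrFun h0 ⟨i, hi⟩
        simpa [hc] using this
      · exact hoff i hi
    · rw [aux_mulVec_colSub, hext, (aux_verif_ker H hH _).mpr ⟨x, rfl⟩]
  · rintro ⟨c, hc0, hc⟩
    rw [aux_mulVec_colSub] at hc
    obtain ⟨x, hx⟩ := (aux_verif_ker H hH _).mp hc
    have hcx : ∀ j : {j : Fin m // j ∈ T},
        (H *ᵥ x) (j : Fin m) = c j := by
      intro j
      rw [hx]
      simp [j.2]
    have hx0 : x ≠ 0 := by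
      intro h0
      apply hc0
      funext j
      have := hcx j
      rw [h0, mulVec_zero] at this
      exact (this.symm ▸ rfl : c j = 0)
    refine ⟨x, hx0, ?_⟩
    funext i
    rw [hsub, hx]
    simp [i.2]

/-- If `rank(F^S) = |S| - s`, then every subset of `S` of cardinality `|S| - s + 1` is
critical, and some subset of cardinality `|S| - s` is non-critical. -/
theorem stmt1 {m n : ℕ} (H : Matrix (Fin m) (Fin n) ℂ) (hH : H.rank = n)
    (S : Finset (Fin m)) (s : ℕ) (hs : s ≤ S.card)
    (hrank : (colSub (verif H) S).rank = S.card - s) :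
    (∀ T ⊆ S, T.card = S.card - s + 1 → IsCritical H T) ∧
      (∃ T ⊆ S, T.card = S.card - s ∧ ¬ IsCritical H T) := by
  classical
  constructor
  · intro T hTS hTcard
    rw [aux_isCritical_iff H hH]
    have hmono : (colSub (verif H) T).rank ≤ (colSub (verif H) S).rank := by
      rw [aux_colSub_rank_eq, aux_colSub_rank_eq]
      exact Submodule.finrank_mono (span_mono (Set.image_mono (by exact_mod_cast hTS)))
    omega
  · obtain ⟨t, hts, hspan, hli⟩ := exists_linearIndependent ℂ ((verif H)ᵀ '' ↑S)
    have htfin : t.Finite := ((S.finite_toSet).image _).subset hts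
    haveI := htfin.fintype
    have hchoice : ∀ v ∈ t, ∃ j, j ∈ S ∧ (verif H)ᵀ j = v := fun v hv => by
      obtain ⟨j, hj, hjv⟩ := hts hv; exact ⟨j, hj, hjv⟩
    choose f hf1 hf2 using hchoice
    set T : Finset (Fin m) := t.toFinset.attach.image
      (fun v => f v.1 (Set.mem_toFinset.mp v.2)) with hT
    have hTS : T ⊆ S := by
      intro j hj
      rw [hT, Finset.mem_image] at hj
      obtain ⟨v, _, rfl⟩ := hj
      exact hf1 _ _
    have himg : (verif H)ᵀ '' ↑T = t := by
      apply Set.Subset.antisymm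
      · rintro v ⟨j, hj, rfl⟩
        rw [Finset.mem_coe, hT, Finset.mem_image] at hj
        obtain ⟨v', _, rfl⟩ := hj
        rw [hf2]
        exact Set.mem_toFinset.mp v'.2
      · intro v hv
        refine ⟨f v hv, ?_, hf2 v hv⟩
        rw [Finset.mem_coe, hT, Finset.mem_image]
        exact ⟨⟨v, Set.mem_toFinset.mpr hv⟩, Finset.mem_attach _ _, rfl⟩
    have hinj : Function.Injective
        (fun v : {x // x ∈ t.toFinset} => f v.1 (Set.mem_toFinset.mp v.2)) := by
      intro v1 v2 h
      have e1 := hf2 v1.1 (Set.mem_toFinset.mp v1.2)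
      have e2 := hf2 v2.1 (Set.mem_toFinset.mp v2.2)
      apply Subtype.ext
      simp only at h
      rw [← e1, ← e2, h]
    have hTcard : T.card = t.toFinset.card := by
      rw [hT, Finset.card_image_of_injective _ hinj, Finset.card_attach]
    have hfr : finrank ℂ (span ℂ t) = t.toFinset.card := finrank_span_set_eq_card hli
    have hrkT : (colSub (verif H) T).rank = finrank ℂ (span ℂ t) := by
      rw [aux_colSub_rank_eq, himg]
    have hrkS : (colSub (verif H) S).rank = finrank ℂ (span ℂ t) := by
      rw [aux_colSub_rank_eq, hspan]
    have hcard : T.card = S.card - s := by omega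
    refine ⟨T, hTS, hcard, ?_⟩
    rw [aux_isCritical_iff H hH]
    omega
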